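/- For the function φ(t) := Σ_{k=1}^∞ sin²(πt/2^k), the limits lim_{l→∞} φ(t + 2^l) = φ(t) + φ(1) and lim_{l→∞} φ(t − 2^l) = φ(t) + φ(1) hold uniformly on every compact subset of ℝ; that is, for every compact K ⊆ ℝ, sup_{t∈K} |φ(t ± 2^l) − φ(t) − φ(1)| → 0 as l → ∞. -/

import Mathlib

open Real Filter Topology

/-- The function `φ(t) = ∑_{k=1}^∞ sin²(π t / 2^k)`. -/
noncomputable def levitanPhi (t : ℝ) : ℝ :=
  ∑' k : ℕ, Real.sin (Real.pi * t / 2 ^ (k + 1)) ^ 2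

lemma abs_sin_sub_sin_le (x y : ℝ) : |Real.sin x - Real.sin y| ≤ |x - y| := by
  rw [Real.sin_sub_sin, abs_mul, abs_mul]
  have h1 : |Real.sin ((x - y) / 2)| ≤ |x - y| / 2 := by
    simpa [abs_div] using Real.abs_sin_le_abs (x := (x - y) / 2)
  have h2 : |Real.cos ((x + y) / 2)| ≤ 1 := Real.abs_cos_le_one _
  have h3 : |(2 : ℝ)| = 2 := by norm_num
  calc |2| * |Real.sin ((x - y) / 2)| * |Real.cos ((x + y) / 2)|
      ≤ 2 * (|x - y| / 2) * 1 := by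
        rw [h3]
        exact mul_le_mul (mul_le_mul_of_nonneg_left h1 (by norm_num)) h2 (abs_nonneg _)
          (by positivity)
    _ = |x - y| := by ring

lemma sin_sq_add_int_mul_pi (x : ℝ) (n : ℤ) :
    Real.sin (x + n * Real.pi) ^ 2 = Real.sin x ^ 2 := by
  rw [Real.sin_add_int_mul_pi, mul_pow]
  have h : ((-1 : ℝ) ^ n) ^ 2 = 1 := by
    rw [← zpow_natCast ((-1 : ℝ) ^ n) 2, ← zpow_mul, Even.neg_one_zpow ⟨n, by ring⟩]
  rw [h, one_mul]

lemma levitan_summable (t : ℝ) :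
    Summable (fun k : ℕ => Real.sin (Real.pi * t / 2 ^ (k + 1)) ^ 2) := by
  have hg : Summable (fun k : ℕ => (Real.pi * t) ^ 2 * ((1 : ℝ) / 4) ^ (k + 1)) := by
    apply Summable.mul_left
    exact (summable_geometric_of_lt_one (by norm_num) (by norm_num)).comp_injective
      (add_left_injective 1)
  refine Summable.of_nonneg_of_le (fun k => sq_nonneg _) (fun k => ?_) hg
  have h := Real.sin_sq_le_sq (x := Real.pi * t / 2 ^ (k + 1))
  refine h.trans (le_of_eq ?_)
  have h4 : ((2 : ℝ) ^ (k + 1)) ^ 2 = 4 ^ (k + 1) := by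
    rw [← pow_mul, pow_mul']; norm_num
  rw [div_pow, h4, one_div_pow, mul_one_div]

lemma key_identity (t : ℝ) (l : ℕ) (ε : ℝ) (hε : ε = 1 ∨ ε = -1) :
    levitanPhi (t + ε * 2 ^ l) - levitanPhi t - levitanPhi 1 =
      ∑' j : ℕ, (Real.sin (Real.pi * t / 2 ^ (l + j + 1) + ε * Real.pi / 2 ^ (j + 1)) ^ 2
        - Real.sin (Real.pi * t / 2 ^ (l + j + 1)) ^ 2
        - Real.sin (Real.pi * 1 / 2 ^ (j + 1)) ^ 2) := by
  have hs := levitan_summable (t + ε * 2 ^ l)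
  have ht := levitan_summable t
  have h1 := levitan_summable 1
  have e1 := Summable.sum_add_tsum_nat_add (f := fun k : ℕ =>
    Real.sin (Real.pi * (t + ε * 2 ^ l) / 2 ^ (k + 1)) ^ 2) l hs
  have e2 := Summable.sum_add_tsum_nat_add (f := fun k : ℕ =>
    Real.sin (Real.pi * t / 2 ^ (k + 1)) ^ 2) l ht
  have hhead : ∀ k ∈ Finset.range l,
      Real.sin (Real.pi * (t + ε * 2 ^ l) / 2 ^ (k + 1)) ^ 2 =
      Real.sin (Real.pi * t / 2 ^ (k + 1)) ^ 2 := by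
    intro k hk
    rw [Finset.mem_range] at hk
    have harg : Real.pi * (t + ε * 2 ^ l) / 2 ^ (k + 1) =
        Real.pi * t / 2 ^ (k + 1) + (ε * 2 ^ (l - (k + 1))) * Real.pi := by
      have h2 : (2 : ℝ) ^ l = 2 ^ (l - (k + 1)) * 2 ^ (k + 1) := by
        rw [← pow_add]; congr 1; omega
      rw [h2]; field_simp
    obtain ⟨n, hn⟩ : ∃ n : ℤ, ε * 2 ^ (l - (k + 1)) = (n : ℝ) := by
      rcases hε with h | h <;> subst h
      · exact ⟨2 ^ (l - (k + 1)), by push_cast; ring⟩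
      · exact ⟨-2 ^ (l - (k + 1)), by push_cast; ring⟩
    rw [harg, hn, sin_sq_add_int_mul_pi]
  have htail : ∀ j : ℕ,
      Real.sin (Real.pi * (t + ε * 2 ^ l) / 2 ^ (j + l + 1)) ^ 2 =
      Real.sin (Real.pi * t / 2 ^ (l + j + 1) + ε * Real.pi / 2 ^ (j + 1)) ^ 2 := by
    intro j
    congr 2
    have h2 : (2 : ℝ) ^ (j + l + 1) = 2 ^ (j + 1) * 2 ^ l := by
      rw [← pow_add]; congr 1; omega
    have h3 : (2 : ℝ) ^ (l + j + 1) = 2 ^ (j + l + 1) := by congr 1; omega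
    rw [h3]
    field_simp [h2]
    ring
  have hA : Summable (fun j : ℕ =>
      Real.sin (Real.pi * t / 2 ^ (l + j + 1) + ε * Real.pi / 2 ^ (j + 1)) ^ 2) := by
    have h := (summable_nat_add_iff (f := fun k : ℕ =>
      Real.sin (Real.pi * (t + ε * 2 ^ l) / 2 ^ (k + 1)) ^ 2) l).2 hs
    exact h.congr fun j => htail j
  have hB : Summable (fun j : ℕ => Real.sin (Real.pi * t / 2 ^ (l + j + 1)) ^ 2) := by
    have h := (summable_nat_add_iff (f := fun k : ℕ =>
      Real.sin (Real.pi * t / 2 ^ (k + 1)) ^ 2) l).2 ht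
    exact h.congr fun j => by rw [add_comm j l]
  have hφ1 : levitanPhi (t + ε * 2 ^ l) =
      (∑ k ∈ Finset.range l, Real.sin (Real.pi * t / 2 ^ (k + 1)) ^ 2) +
      ∑' j : ℕ, Real.sin (Real.pi * t / 2 ^ (l + j + 1) + ε * Real.pi / 2 ^ (j + 1)) ^ 2 := by
    rw [levitanPhi, ← e1]
    congr 1
    · exact Finset.sum_congr rfl hhead
    · exact tsum_congr htail
  have hφ2 : levitanPhi t =
      (∑ k ∈ Finset.range l, Real.sin (Real.pi * t / 2 ^ (k + 1)) ^ 2) +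
      ∑' j : ℕ, Real.sin (Real.pi * t / 2 ^ (l + j + 1)) ^ 2 := by
    rw [levitanPhi, ← e2]
    congr 1
    exact tsum_congr fun j => by rw [add_comm j l]
  have hφ3 : levitanPhi 1 = ∑' j : ℕ, Real.sin (Real.pi * 1 / 2 ^ (j + 1)) ^ 2 := rfl
  have h5 : (∑' j : ℕ, (Real.sin (Real.pi * t / 2 ^ (l + j + 1) + ε * Real.pi / 2 ^ (j + 1)) ^ 2
        - Real.sin (Real.pi * t / 2 ^ (l + j + 1)) ^ 2
        - Real.sin (Real.pi * 1 / 2 ^ (j + 1)) ^ 2)) =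
      (∑' j : ℕ, Real.sin (Real.pi * t / 2 ^ (l + j + 1) + ε * Real.pi / 2 ^ (j + 1)) ^ 2)
      - (∑' j : ℕ, Real.sin (Real.pi * t / 2 ^ (l + j + 1)) ^ 2)
      - (∑' j : ℕ, Real.sin (Real.pi * 1 / 2 ^ (j + 1)) ^ 2) := by
    rw [Summable.tsum_sub (hA.sub hB) h1, Summable.tsum_sub hA hB]
  rw [hφ1, hφ2, hφ3, h5]
  ring

lemma key_term_bound (a b : ℝ) :
    |Real.sin (a + b) ^ 2 - Real.sin a ^ 2 - Real.sin b ^ 2| ≤ 3 * |a| := by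
  have h1 : |Real.sin (a + b) - Real.sin b| ≤ |a| := by
    simpa using _root_.abs_sin_sub_sin_le (a + b) b
  have h2 : |Real.sin a| ≤ |a| := Real.abs_sin_le_abs
  have h3 : |Real.sin (a + b) + Real.sin b| ≤ 2 := by
    calc |Real.sin (a + b) + Real.sin b| ≤ |Real.sin (a + b)| + |Real.sin b| := abs_add_le _ _
      _ ≤ 1 + 1 := add_le_add (Real.abs_sin_le_one _) (Real.abs_sin_le_one _)
      _ = 2 := by norm_num
  have h4 : |Real.sin a| ≤ 1 := Real.abs_sin_le_one _
  calc |Real.sin (a + b) ^ 2 - Real.sin a ^ 2 - Real.sin b ^ 2|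
      = |(Real.sin (a + b) - Real.sin b) * (Real.sin (a + b) + Real.sin b)
          - Real.sin a * Real.sin a| := by congr 1; ring
    _ ≤ |(Real.sin (a + b) - Real.sin b) * (Real.sin (a + b) + Real.sin b)|
          + |Real.sin a * Real.sin a| := abs_sub _ _
    _ = |Real.sin (a + b) - Real.sin b| * |Real.sin (a + b) + Real.sin b|
          + |Real.sin a| * |Real.sin a| := by rw [abs_mul, abs_mul]
    _ ≤ |a| * 2 + |a| * 1 :=
        add_le_add (mul_le_mul h1 h3 (abs_nonneg _) (abs_nonneg _))
          (mul_le_mul h2 h4 (abs_nonneg _) (abs_nonneg _))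
    _ = 3 * |a| := by ring

lemma key_bound (t : ℝ) (l : ℕ) (ε : ℝ) (hε : ε = 1 ∨ ε = -1) :
    |levitanPhi (t + ε * 2 ^ l) - levitanPhi t - levitanPhi 1| ≤
      3 * (Real.pi * |t|) / 2 ^ l := by
  rw [key_identity t l ε hε]
  set g : ℕ → ℝ := fun j =>
    Real.sin (Real.pi * t / 2 ^ (l + j + 1) + ε * Real.pi / 2 ^ (j + 1)) ^ 2
      - Real.sin (Real.pi * t / 2 ^ (l + j + 1)) ^ 2
      - Real.sin (Real.pi * 1 / 2 ^ (j + 1)) ^ 2 with hg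
  have hbound : ∀ j : ℕ, |g j| ≤ 3 * (Real.pi * |t|) / 2 ^ l * (1 / 2 : ℝ) ^ (j + 1) := by
    intro j
    have hC : Real.sin (Real.pi * 1 / 2 ^ (j + 1)) ^ 2 =
        Real.sin (ε * Real.pi / 2 ^ (j + 1)) ^ 2 := by
      rcases hε with h | h <;> subst h
      · norm_num
      · rw [show (-1 : ℝ) * Real.pi / 2 ^ (j + 1) = -(Real.pi * 1 / 2 ^ (j + 1)) by ring,
          Real.sin_neg]
        ring
    have hterm := key_term_bound (Real.pi * t / 2 ^ (l + j + 1)) (ε * Real.pi / 2 ^ (j + 1))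
    have habs : |Real.pi * t / 2 ^ (l + j + 1)| = Real.pi * |t| / 2 ^ (l + j + 1) := by
      rw [abs_div, abs_mul, abs_of_nonneg Real.pi_nonneg,
        abs_of_nonneg (by positivity : (0 : ℝ) ≤ 2 ^ (l + j + 1))]
    have h2 : (2 : ℝ) ^ (l + j + 1) = 2 ^ l * 2 ^ (j + 1) := by
      rw [← pow_add]; congr 1
    have heq : 3 * (Real.pi * |t| / 2 ^ (l + j + 1)) =
        3 * (Real.pi * |t|) / 2 ^ l * (1 / 2 : ℝ) ^ (j + 1) := by
      rw [h2, one_div_pow]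
      have hj : ((2 : ℝ) ^ (j + 1)) ≠ 0 := by positivity
      have hl : ((2 : ℝ) ^ l) ≠ 0 := by positivity
      field_simp
    rw [hg]
    simp only []
    rw [hC]
    calc |Real.sin (Real.pi * t / 2 ^ (l + j + 1) + ε * Real.pi / 2 ^ (j + 1)) ^ 2
        - Real.sin (Real.pi * t / 2 ^ (l + j + 1)) ^ 2
        - Real.sin (ε * Real.pi / 2 ^ (j + 1)) ^ 2|
        ≤ 3 * |Real.pi * t / 2 ^ (l + j + 1)| := hterm
      _ = 3 * (Real.pi * |t| / 2 ^ (l + j + 1)) := by rw [habs]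
      _ = 3 * (Real.pi * |t|) / 2 ^ l * (1 / 2 : ℝ) ^ (j + 1) := heq
  have hgeom : Summable (fun j : ℕ => 3 * (Real.pi * |t|) / 2 ^ l * (1 / 2 : ℝ) ^ (j + 1)) := by
    apply Summable.mul_left
    exact (summable_geometric_of_lt_one (by norm_num) (by norm_num)).comp_injective
      (add_left_injective 1)
  have habs_sum : Summable (fun j : ℕ => |g j|) :=
    Summable.of_nonneg_of_le (fun _ => abs_nonneg _) hbound hgeom
  have hnorm : |∑' j : ℕ, g j| ≤ ∑' j : ℕ, |g j| := by
    have := norm_tsum_le_tsum_norm (f := g)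
      (by simpa [Real.norm_eq_abs] using habs_sum)
    simpa [Real.norm_eq_abs] using this
  have hsum_geom : ∑' j : ℕ, ((1 : ℝ) / 2) ^ (j + 1) = 1 := by
    simp_rw [pow_succ]
    rw [tsum_mul_right, tsum_geometric_of_lt_one (by norm_num) (by norm_num)]
    norm_num
  calc |∑' j : ℕ, g j| ≤ ∑' j : ℕ, |g j| := hnorm
    _ ≤ ∑' j : ℕ, 3 * (Real.pi * |t|) / 2 ^ l * (1 / 2 : ℝ) ^ (j + 1) :=
        Summable.tsum_le_tsum hbound habs_sum hgeom
    _ = 3 * (Real.pi * |t|) / 2 ^ l * ∑' j : ℕ, ((1 : ℝ) / 2) ^ (j + 1) := tsum_mul_left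
    _ = 3 * (Real.pi * |t|) / 2 ^ l := by rw [hsum_geom, mul_one]

lemma aux_tendsto (K : Set ℝ) (M : ℝ) (hM : ∀ t ∈ K, |t| ≤ M) (ε : ℝ)
    (hε : ε = 1 ∨ ε = -1) :
    TendstoUniformlyOn (fun (l : ℕ) (t : ℝ) => levitanPhi (t + ε * 2 ^ l))
      (fun t => levitanPhi t + levitanPhi 1) atTop K := by
  rw [Metric.tendstoUniformlyOn_iff]
  intro δ hδ
  have h0 : Tendsto (fun l : ℕ => 3 * (Real.pi * M) / 2 ^ l) atTop (nhds 0) := by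
    have h1 := (tendsto_pow_atTop_nhds_zero_of_lt_one
      (r := (1 / 2 : ℝ)) (by norm_num) (by norm_num)).const_mul (3 * (Real.pi * M))
    simpa [div_eq_mul_inv, one_div, inv_pow] using h1
  filter_upwards [h0.eventually_lt_const hδ] with l hl t htK
  rw [Real.dist_eq]
  have hMt : |t| ≤ M := hM t htK
  calc |levitanPhi t + levitanPhi 1 - levitanPhi (t + ε * 2 ^ l)|
      = |levitanPhi (t + ε * 2 ^ l) - levitanPhi t - levitanPhi 1| := by
        rw [abs_sub_comm]; congr 1; ring
    _ ≤ 3 * (Real.pi * |t|) / 2 ^ l := key_bound t l ε hε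
    _ ≤ 3 * (Real.pi * M) / 2 ^ l := by gcongr
    _ < δ := hl

/-- `φ(t ± 2^l) → φ(t) + φ(1)` as `l → ∞`, uniformly on every compact subset of `ℝ`. -/
theorem stmt1 (K : Set ℝ) (hK : IsCompact K) :
    TendstoUniformlyOn (fun (l : ℕ) (t : ℝ) => levitanPhi (t + 2 ^ l))
      (fun t => levitanPhi t + levitanPhi 1) atTop K ∧
    TendstoUniformlyOn (fun (l : ℕ) (t : ℝ) => levitanPhi (t - 2 ^ l))
      (fun t => levitanPhi t + levitanPhi 1) atTop K := by
  obtain ⟨M, hM⟩ := hK.isBounded.exists_norm_le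
  have hM' : ∀ t ∈ K, |t| ≤ M := fun t ht => by simpa [Real.norm_eq_abs] using hM t ht
  constructor
  · have h := aux_tendsto K M hM' 1 (Or.inl rfl)
    simpa using h
  · have h := aux_tendsto K M hM' (-1) (Or.inr rfl)
    simpa [sub_eq_add_neg, neg_mul, one_mul] using h
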